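/- Let α : ℝ² → ℝ be twice continuously differentiable with ∂_t α + ∂_x² α = 0 at every point of ℝ² (the backward linear heat equation). Let u, v : ℝ² → ℝ be continuously differentiable functions satisfying the potential system ∂_x v = u and ∂_t v = ∂_x u + u² at every point of ℝ² (the potential system of the Burgers equation u_t = u_xx + 2uu_x). Then for all (t,x) ∈ ℝ²: ∂_t[α(t,x)·e^{v(t,x)}] + ∂_x[∂_x α(t,x)·e^{v(t,x)} − α(t,x)·u(t,x)·e^{v(t,x)}] = 0. (Case 1.6: the pair F = αe^v, G = α_x e^v − αue^v is a conserved vector of the potential system of the Burgers equation, giving an infinite series of potential conservation laws.) -/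

import Mathlib

/-- Partial derivative with respect to the first (time) variable. -/
noncomputable def pT (f : ℝ → ℝ → ℝ) (t x : ℝ) : ℝ := deriv (fun s => f s x) t

/-- Partial derivative with respect to the second (space) variable. -/
noncomputable def pX (f : ℝ → ℝ → ℝ) (t x : ℝ) : ℝ := deriv (fun y => f t y) x

lemma sliceX {f : ℝ → ℝ → ℝ} {n : ℕ∞} (h : ContDiff ℝ n (fun p : ℝ × ℝ => f p.1 p.2))
    (t : ℝ) : ContDiff ℝ n (fun y => f t y) :=
  h.comp (contDiff_const.prodMk contDiff_id)

lemma sliceT {f : ℝ → ℝ → ℝ} {n : ℕ∞} (h : ContDiff ℝ n (fun p : ℝ × ℝ => f p.1 p.2))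
    (x : ℝ) : ContDiff ℝ n (fun s => f s x) :=
  h.comp (contDiff_id.prodMk contDiff_const)

/-- Case 1.6: the pair `F = α e^v`, `G = α_x e^v − α u e^v` is a conserved vector of the
potential system `v_x = u`, `v_t = u_x + u²` of the Burgers equation, for every solution
`α` of the backward linear heat equation `α_t + α_xx = 0`. -/
theorem conserved_vector_case_1_6
    (α : ℝ → ℝ → ℝ) (hα : ContDiff ℝ 2 (fun p : ℝ × ℝ => α p.1 p.2))
    (hback : ∀ t x : ℝ, pT α t x + pX (pX α) t x = 0)
    (u v : ℝ → ℝ → ℝ)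
    (hu : ContDiff ℝ 1 (fun p : ℝ × ℝ => u p.1 p.2))
    (hv : ContDiff ℝ 1 (fun p : ℝ × ℝ => v p.1 p.2))
    (hvx : ∀ t x : ℝ, pX v t x = u t x)
    (hvt : ∀ t x : ℝ, pT v t x = pX u t x + (u t x) ^ 2) :
    ∀ t x : ℝ,
      pT (fun t x => α t x * Real.exp (v t x)) t x
        + pX (fun t x =>
            pX α t x * Real.exp (v t x) - α t x * u t x * Real.exp (v t x)) t x = 0 := by
  intro t x
  -- time derivatives
  have h1 : HasDerivAt (fun s => α s x) (pT α t x) t :=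
    (((sliceT hα x).differentiable (by norm_num)) t).hasDerivAt
  have h2 : HasDerivAt (fun s => v s x) (pT v t x) t :=
    (((sliceT hv x).differentiable (by norm_num)) t).hasDerivAt
  have e1 : pT (fun t x => α t x * Real.exp (v t x)) t x
      = pT α t x * Real.exp (v t x) + α t x * (Real.exp (v t x) * pT v t x) :=
    (h1.mul h2.exp).deriv
  -- space derivatives
  have hx1 : HasDerivAt (fun y => α t y) (pX α t x) x :=
    (((sliceX hα t).differentiable (by norm_num)) x).hasDerivAt
  have hx2 : HasDerivAt (fun y => v t y) (pX v t x) x :=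
    (((sliceX hv t).differentiable (by norm_num)) x).hasDerivAt
  have hx3 : HasDerivAt (fun y => u t y) (pX u t x) x :=
    (((sliceX hu t).differentiable (by norm_num)) x).hasDerivAt
  have hαd : ContDiff ℝ 1 (deriv (fun y => α t y)) := by
    have hc : ContDiff ℝ (1 + 1) (fun y => α t y) := by
      exact_mod_cast sliceX hα t
    exact (contDiff_succ_iff_deriv.mp hc).2.2
  have hx4 : HasDerivAt (fun y => pX α t y) (pX (pX α) t x) x :=
    ((hαd.differentiable (by norm_num)) x).hasDerivAt
  have e2 : pX (fun t x => pX α t x * Real.exp (v t x) - α t x * u t x * Real.exp (v t x)) t x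
      = (pX (pX α) t x * Real.exp (v t x) + pX α t x * (Real.exp (v t x) * pX v t x))
        - ((pX α t x * u t x + α t x * pX u t x) * Real.exp (v t x)
            + α t x * u t x * (Real.exp (v t x) * pX v t x)) :=
    ((hx4.mul hx2.exp).sub ((hx1.mul hx3).mul hx2.exp)).deriv
  rw [e1, e2, hvx, hvt]
  have hb : pX (pX α) t x = - pT α t x := by linarith [hback t x]
  rw [hb]
  ring
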